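/- Proposition 6.3: For the Lie algebra example on ℝ⁴, the scalar curvature of the RPT-connection ∇' equals τ' = −4(λ₁² + λ₂² + λ₃² + λ₄²), where τ' is the sum over i, j of g(R'(eᵢ,eⱼ)eⱼ, eᵢ) with R'(x,y)z = ∇'ₓ(∇'_y z) − ∇'_y(∇'ₓ z) − ∇'_{[x,y]}z; in particular τ' is negative whenever (λ₁,λ₂,λ₃,λ₄) ≠ (0,0,0,0). -/

import Mathlib

/-- The 4-dimensional real vector space of the Lie group example. -/
abbrev V4 : Type := Fin 4 → ℝ

/-- The standard inner product on `ℝ⁴`. -/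
def g4 (x y : V4) : ℝ := ∑ i, x i * y i

/-- The almost product structure `P` with `Pe₁ = e₃, Pe₂ = e₄, Pe₃ = e₁, Pe₄ = e₂`. -/
def P4 (x : V4) : V4 := ![x 2, x 3, x 0, x 1]

/-- The standard basis vectors `e₁, e₂, e₃, e₄` of `ℝ⁴`. -/
def e4 (i : Fin 4) : V4 := Pi.single i 1
noncomputable section

/-- The covariant derivative `(∇ₓP)y = ∇ₓ(Py) - P(∇ₓy)` built from a connection `nb`. -/
def cdP (nb : V4 → V4 → V4) (x y : V4) : V4 := nb x (P4 y) - P4 (nb x y)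

/-- The transformation tensor `Q(x,y) = -(1/4){(∇ₓP)(Py) - (∇_{Px}P)y - 2(∇_yP)(Px)}`
of the RPT-connection. -/
def Q4 (nb : V4 → V4 → V4) (x y : V4) : V4 :=
  -((1/4 : ℝ) • (cdP nb x (P4 y) - cdP nb (P4 x) y - (2 : ℝ) • cdP nb y (P4 x)))

/-- The RPT-connection `∇'ₓy = ∇ₓy + Q(x,y)`. -/
def nbP (nb : V4 → V4 → V4) (x y : V4) : V4 := nb x y + Q4 nb x y

/-- The torsion `T(x,y) = ∇'ₓy - ∇'_yx - [x,y]` of the RPT-connection. -/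
def Tor4 (B nb : V4 → V4 → V4) (x y : V4) : V4 := nbP nb x y - nbP nb y x - B x y

/-- The curvature operator `R(x,y)z = ∇ₓ(∇_yz) - ∇_y(∇ₓz) - ∇_{[x,y]}z` of a
connection `nab` (on left-invariant fields of the Lie group with bracket `B`). -/
def R4 (B nab : V4 → V4 → V4) (x y z : V4) : V4 :=
  nab x (nab y z) - nab y (nab x z) - nab (B x y) z

lemma g4_e4 (x : V4) (k : Fin 4) : g4 x (e4 k) = x k := by
  simp [g4, e4, Pi.single_apply]

lemma basis_expand (x : V4) :
    x = x 0 • e4 0 + x 1 • e4 1 + x 2 • e4 2 + x 3 • e4 3 := by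
  funext k
  fin_cases k <;> simp [e4, Pi.single_apply]

def Bex (l1 l2 l3 l4 : ℝ) (x y : V4) : V4 :=
  ![l1*(x 0*y 1 - x 1*y 0) - l3*(x 0*y 3 - x 3*y 0) - l4*(x 1*y 3 - x 3*y 1),
    l2*(x 0*y 1 - x 1*y 0) + l3*(x 0*y 2 - x 2*y 0) + l4*(x 1*y 2 - x 2*y 1),
    l1*(x 1*y 2 - x 2*y 1) + l2*(x 1*y 3 - x 3*y 1) + l3*(x 2*y 3 - x 3*y 2),
    -l1*(x 0*y 2 - x 2*y 0) - l2*(x 0*y 3 - x 3*y 0) + l4*(x 2*y 3 - x 3*y 2)]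

lemma Bex_eq (l1 l2 l3 l4 : ℝ) (B : V4 → V4 → V4)
    (hBadd1 : ∀ x x' y, B (x + x') y = B x y + B x' y)
    (hBsmul1 : ∀ (a : ℝ) (x y : V4), B (a • x) y = a • B x y)
    (hBadd2 : ∀ x y y', B x (y + y') = B x y + B x y')
    (hBsmul2 : ∀ (a : ℝ) (x y : V4), B x (a • y) = a • B x y)
    (hBanti : ∀ x y, B x y = -B y x)
    (hB12 : B (e4 0) (e4 1) = l1 • e4 0 + l2 • e4 1)
    (hB13 : B (e4 0) (e4 2) = l3 • e4 1 - l1 • e4 3)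
    (hB14 : B (e4 0) (e4 3) = -(l3 • e4 0) - l2 • e4 3)
    (hB23 : B (e4 1) (e4 2) = l4 • e4 1 + l1 • e4 2)
    (hB24 : B (e4 1) (e4 3) = -(l4 • e4 0) + l2 • e4 2)
    (hB34 : B (e4 2) (e4 3) = l3 • e4 2 + l4 • e4 3) :
    ∀ x y, B x y = Bex l1 l2 l3 l4 x y := by
  have hB0 : ∀ x, B x x = 0 := by
    intro x
    funext k
    have h := congrFun (hBanti x x) k
    have : B x x k = -(B x x k) := h
    have : B x x k = 0 := by linarith
    simpa using this
  have hB21 : B (e4 1) (e4 0) = -(l1 • e4 0 + l2 • e4 1) := by rw [hBanti, hB12]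
  have hB31 : B (e4 2) (e4 0) = -(l3 • e4 1 - l1 • e4 3) := by rw [hBanti, hB13]
  have hB41 : B (e4 3) (e4 0) = -(-(l3 • e4 0) - l2 • e4 3) := by rw [hBanti, hB14]
  have hB32 : B (e4 2) (e4 1) = -(l4 • e4 1 + l1 • e4 2) := by rw [hBanti, hB23]
  have hB42 : B (e4 3) (e4 1) = -(-(l4 • e4 0) + l2 • e4 2) := by rw [hBanti, hB24]
  have hB43 : B (e4 3) (e4 2) = -(l3 • e4 2 + l4 • e4 3) := by rw [hBanti, hB34]
  intro x y
  have key : B (x 0 • e4 0 + x 1 • e4 1 + x 2 • e4 2 + x 3 • e4 3)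
      (y 0 • e4 0 + y 1 • e4 1 + y 2 • e4 2 + y 3 • e4 3) = Bex l1 l2 l3 l4 x y := by
    simp only [hBadd1, hBadd2, hBsmul1, hBsmul2, hB12, hB13, hB14, hB23, hB24, hB34,
      hB21, hB31, hB41, hB32, hB42, hB43, hB0]
    funext k
    fin_cases k <;>
      simp [Bex, e4, Pi.single_apply] <;> ring
  rw [← basis_expand x, ← basis_expand y] at key
  exact key

noncomputable def Nex (l1 l2 l3 l4 : ℝ) (x y : V4) : V4 :=
  fun k => (1/2) * (Bex l1 l2 l3 l4 x y k
    + g4 (Bex l1 l2 l3 l4 (e4 k) x) y + g4 (Bex l1 l2 l3 l4 (e4 k) y) x)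

lemma Nex_eq (l1 l2 l3 l4 : ℝ) (B : V4 → V4 → V4)
    (hB : ∀ x y, B x y = Bex l1 l2 l3 l4 x y)
    (nb : V4 → V4 → V4)
    (hK : ∀ x y z, 2 * g4 (nb x y) z = g4 (B x y) z + g4 (B z x) y + g4 (B z y) x) :
    ∀ x y, nb x y = Nex l1 l2 l3 l4 x y := by
  intro x y
  funext k
  have h := hK x y (e4 k)
  rw [hB x y, hB (e4 k) x, hB (e4 k) y, g4_e4, g4_e4] at h
  show nb x y k = (1/2) * _
  linarith





noncomputable def Cex (l1 l2 l3 l4 : ℝ) (x y : V4) : V4 :=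
  ![(1/2)*l1*x 0*y 3+(1/2)*l1*x 2*y 1-l1*x 3*y 0+(1/2)*l2*x 1*y 3-(1/2)*l2*x 3*y 1-(1/2)*l3*x 0*y 1+l3*x 1*y 0-(1/2)*l3*x 2*y 3+(1/2)*l4*x 1*y 1-(1/2)*l4*x 3*y 3,
    -(1/2)*l1*x 0*y 2+(1/2)*l1*x 2*y 0-(1/2)*l2*x 1*y 2+l2*x 2*y 1-(1/2)*l2*x 3*y 0-(1/2)*l3*x 0*y 0+(1/2)*l3*x 2*y 2-l4*x 0*y 1+(1/2)*l4*x 1*y 0+(1/2)*l4*x 3*y 2,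
    -(1/2)*l1*x 0*y 1-(1/2)*l1*x 2*y 3+l1*x 3*y 2-(1/2)*l2*x 1*y 1+(1/2)*l2*x 3*y 3+(1/2)*l3*x 0*y 3-l3*x 1*y 2+(1/2)*l3*x 2*y 1-(1/2)*l4*x 1*y 3+(1/2)*l4*x 3*y 1,
    (1/2)*l1*x 0*y 0-(1/2)*l1*x 2*y 2+(1/2)*l2*x 1*y 0-l2*x 2*y 3+(1/2)*l2*x 3*y 2+(1/2)*l3*x 0*y 2-(1/2)*l3*x 2*y 0+l4*x 0*y 3-(1/2)*l4*x 1*y 2-(1/2)*l4*x 3*y 0]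

noncomputable def NPex (l1 l2 l3 l4 : ℝ) (x y : V4) : V4 :=
  ![l1*x 0*y 1-l1*x 2*y 3+l2*x 1*y 1-l2*x 3*y 3-l3*x 0*y 3+l3*x 2*y 1-l4*x 1*y 3+l4*x 3*y 1,
    -l1*x 0*y 0+l1*x 2*y 2-l2*x 1*y 0+l2*x 3*y 2+l3*x 0*y 2-l3*x 2*y 0+l4*x 1*y 2-l4*x 3*y 0,
    l1*x 0*y 3-l1*x 2*y 1+l2*x 1*y 3-l2*x 3*y 1-l3*x 0*y 1+l3*x 2*y 3-l4*x 1*y 1+l4*x 3*y 3,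
    -l1*x 0*y 2+l1*x 2*y 0-l2*x 1*y 2+l2*x 3*y 0+l3*x 0*y 0-l3*x 2*y 2+l4*x 1*y 0-l4*x 3*y 2]

set_option maxHeartbeats 2000000 in
lemma Cex_eq (l1 l2 l3 l4 : ℝ) (nb : V4 → V4 → V4)
    (hnb : ∀ x y, nb x y = Nex l1 l2 l3 l4 x y) :
    ∀ x y, cdP nb x y = Cex l1 l2 l3 l4 x y := by
  intro x y
  funext k
  simp only [cdP, hnb]
  fin_cases k <;>
    (simp [Nex, Bex, g4, P4, e4, Cex, Fin.sum_univ_four, Pi.single_apply, Matrix.vecHead, Matrix.vecTail, Pi.add_apply, Pi.sub_apply, Pi.smul_apply, Pi.neg_apply, smul_eq_mul]; ring)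

set_option maxHeartbeats 2000000 in
lemma NPex_eq (l1 l2 l3 l4 : ℝ) (nb : V4 → V4 → V4)
    (hnb : ∀ x y, nb x y = Nex l1 l2 l3 l4 x y) :
    ∀ x y, nbP nb x y = NPex l1 l2 l3 l4 x y := by
  have hC := Cex_eq l1 l2 l3 l4 nb hnb
  intro x y
  funext k
  simp only [nbP, Q4, hC, hnb]
  fin_cases k <;>
    (simp [Nex, Bex, g4, Cex, NPex, P4, e4, Fin.sum_univ_four, Pi.single_apply, Matrix.vecHead, Matrix.vecTail, Pi.add_apply, Pi.sub_apply, Pi.smul_apply, Pi.neg_apply, smul_eq_mul]; ring)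

set_option maxHeartbeats 4000000 in
/-- Proposition 6.3: for the Lie algebra example on `ℝ⁴`, the scalar
curvature of the RPT-connection is `τ' = -4(λ₁² + λ₂² + λ₃² + λ₄²)`; in particular
`τ' < 0` whenever `(λ₁,λ₂,λ₃,λ₄) ≠ (0,0,0,0)`. -/
theorem stmt_16
    (l1 l2 l3 l4 : ℝ) (B : V4 → V4 → V4)
    (hBadd1 : ∀ x x' y, B (x + x') y = B x y + B x' y)
    (hBsmul1 : ∀ (a : ℝ) (x y : V4), B (a • x) y = a • B x y)
    (hBadd2 : ∀ x y y', B x (y + y') = B x y + B x y')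
    (hBsmul2 : ∀ (a : ℝ) (x y : V4), B x (a • y) = a • B x y)
    (hBanti : ∀ x y, B x y = -B y x)
    (hB12 : B (e4 0) (e4 1) = l1 • e4 0 + l2 • e4 1)
    (hB13 : B (e4 0) (e4 2) = l3 • e4 1 - l1 • e4 3)
    (hB14 : B (e4 0) (e4 3) = -(l3 • e4 0) - l2 • e4 3)
    (hB23 : B (e4 1) (e4 2) = l4 • e4 1 + l1 • e4 2)
    (hB24 : B (e4 1) (e4 3) = -(l4 • e4 0) + l2 • e4 2)
    (hB34 : B (e4 2) (e4 3) = l3 • e4 2 + l4 • e4 3)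
    (nb : V4 → V4 → V4)
    (hK : ∀ x y z, 2 * g4 (nb x y) z = g4 (B x y) z + g4 (B z x) y + g4 (B z y) x)
    :
    (∑ i : Fin 4, ∑ j : Fin 4,
        g4 (R4 B (nbP nb) (e4 i) (e4 j) (e4 j)) (e4 i))
      = -4 * (l1 ^ 2 + l2 ^ 2 + l3 ^ 2 + l4 ^ 2) ∧
    (¬(l1 = 0 ∧ l2 = 0 ∧ l3 = 0 ∧ l4 = 0) →
      (∑ i : Fin 4, ∑ j : Fin 4,
        g4 (R4 B (nbP nb) (e4 i) (e4 j) (e4 j)) (e4 i)) < 0) := by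
  have hB' := Bex_eq l1 l2 l3 l4 B hBadd1 hBsmul1 hBadd2 hBsmul2 hBanti
    hB12 hB13 hB14 hB23 hB24 hB34
  have hnb := Nex_eq l1 l2 l3 l4 B hB' nb hK
  have hNP := NPex_eq l1 l2 l3 l4 nb hnb
  have main : (∑ i : Fin 4, ∑ j : Fin 4,
      g4 (R4 B (nbP nb) (e4 i) (e4 j) (e4 j)) (e4 i))
      = -4 * (l1 ^ 2 + l2 ^ 2 + l3 ^ 2 + l4 ^ 2) := by
    simp only [Fin.sum_univ_four, R4]
    simp only [hNP, hB']
    simp [NPex, Bex, g4, e4, Fin.sum_univ_four, Pi.single_apply, Matrix.vecHead, Matrix.vecTail, Pi.add_apply, Pi.sub_apply, Pi.smul_apply, Pi.neg_apply, smul_eq_mul]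
    ring
  refine ⟨main, fun hne => ?_⟩
  rw [main]
  have h1 : 0 < l1 ^ 2 + l2 ^ 2 + l3 ^ 2 + l4 ^ 2 := by
    rcases not_and_or.mp hne with h | h
    · positivity
    rcases not_and_or.mp h with h | h
    · positivity
    rcases not_and_or.mp h with h | h
    · positivity
    · positivity
  nlinarith
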